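/- The transformation (x,y,z,w) ↦ (x₄,y₄,z₄,w₄) given by x₄ = -((x-2y-2w+2t)y + (z-2y-2w+2s)w - α₄)y, y₄ = 1/y, z₄ = (z-2y-2w+2s)y, w₄ = w/y is symplectic: dx∧dy + dz∧dw = dx₄∧dy₄ + dz₄∧dw₄ on the set y ≠ 0 (with t,s held constant). -/

import Mathlib

noncomputable def Dv (f : ℂ × ℂ × ℂ × ℂ → ℂ) (p v : ℂ × ℂ × ℂ × ℂ) : ℂ :=
  fderiv ℂ f p v

def omega (u v : ℂ × ℂ × ℂ × ℂ) : ℂ :=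
  (u.1 * v.2.1 - v.1 * u.2.1) + (u.2.2.1 * v.2.2.2 - v.2.2.1 * u.2.2.2)

noncomputable def pullback (X Y Z W : ℂ × ℂ × ℂ × ℂ → ℂ) (p u v : ℂ × ℂ × ℂ × ℂ) : ℂ :=
  (Dv X p u * Dv Y p v - Dv X p v * Dv Y p u)
    + (Dv Z p u * Dv W p v - Dv Z p v * Dv W p u)

section helpers

variable (p v : ℂ × ℂ × ℂ × ℂ)

lemma hproj_x : HasFDerivAt (fun q : ℂ × ℂ × ℂ × ℂ => q.1)
    (ContinuousLinearMap.fst ℂ ℂ (ℂ × ℂ × ℂ)) p := hasFDerivAt_fst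

lemma hproj_y : HasFDerivAt (fun q : ℂ × ℂ × ℂ × ℂ => q.2.1)
    ((ContinuousLinearMap.fst ℂ ℂ (ℂ × ℂ)).comp (ContinuousLinearMap.snd ℂ ℂ (ℂ × ℂ × ℂ))) p :=
  hasFDerivAt_fst.comp p hasFDerivAt_snd

lemma hproj_z : HasFDerivAt (fun q : ℂ × ℂ × ℂ × ℂ => q.2.2.1)
    (((ContinuousLinearMap.fst ℂ ℂ ℂ).comp (ContinuousLinearMap.snd ℂ ℂ (ℂ × ℂ))).comp
      (ContinuousLinearMap.snd ℂ ℂ (ℂ × ℂ × ℂ))) p :=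
  (hasFDerivAt_fst.comp _ hasFDerivAt_snd).comp p hasFDerivAt_snd

lemma hproj_w : HasFDerivAt (fun q : ℂ × ℂ × ℂ × ℂ => q.2.2.2)
    (((ContinuousLinearMap.snd ℂ ℂ ℂ).comp (ContinuousLinearMap.snd ℂ ℂ (ℂ × ℂ))).comp
      (ContinuousLinearMap.snd ℂ ℂ (ℂ × ℂ × ℂ))) p :=
  (hasFDerivAt_snd.comp _ hasFDerivAt_snd).comp p hasFDerivAt_snd

lemma hinv_y (hy : p.2.1 ≠ 0) : HasFDerivAt (fun q : ℂ × ℂ × ℂ × ℂ => (q.2.1)⁻¹)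
    (((ContinuousLinearMap.smulRight (1 : ℂ →L[ℂ] ℂ) (-(p.2.1 ^ 2)⁻¹))).comp
      ((ContinuousLinearMap.fst ℂ ℂ (ℂ × ℂ)).comp (ContinuousLinearMap.snd ℂ ℂ (ℂ × ℂ × ℂ)))) p :=
  (hasFDerivAt_inv hy).comp p (hproj_y p)

lemma Dv_Y (hy : p.2.1 ≠ 0) :
    Dv (fun q => 1 / q.2.1) p v = -(v.2.1 / p.2.1 ^ 2) := by
  have he : (fun q : ℂ × ℂ × ℂ × ℂ => 1 / q.2.1) = fun q => (q.2.1)⁻¹ := by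
    funext q; rw [one_div]
  rw [Dv, he, (hinv_y p hy).fderiv]
  simp
  ring

lemma Dv_W (hy : p.2.1 ≠ 0) :
    Dv (fun q => q.2.2.2 / q.2.1) p v = v.2.2.2 / p.2.1 - p.2.2.2 * v.2.1 / p.2.1 ^ 2 := by
  have he : (fun q : ℂ × ℂ × ℂ × ℂ => q.2.2.2 / q.2.1) = fun q => q.2.2.2 * (q.2.1)⁻¹ := by
    funext q; rw [div_eq_mul_inv]
  have h := (hproj_w p).mul (hinv_y p hy)
  simp only [Pi.mul_def, Pi.add_def, Pi.sub_def, Pi.neg_def] at h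
  rw [Dv, he, h.fderiv]
  simp
  field_simp
  ring

lemma Dv_Z (s : ℂ) :
    Dv (fun q => (q.2.2.1 - 2 * q.2.1 - 2 * q.2.2.2 + 2 * s) * q.2.1) p v =
      (v.2.2.1 - 2 * v.2.1 - 2 * v.2.2.2) * p.2.1
        + (p.2.2.1 - 2 * p.2.1 - 2 * p.2.2.2 + 2 * s) * v.2.1 := by
  have h := ((((hproj_z p).sub ((hproj_y p).const_mul 2)).sub
      ((hproj_w p).const_mul 2)).add_const (2 * s)).mul (hproj_y p)
  simp only [Pi.mul_def, Pi.add_def, Pi.sub_def, Pi.neg_def] at h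
  rw [Dv, h.fderiv]
  simp
  ring

lemma Dv_X (α₄ t s : ℂ) :
    Dv (fun q => -((q.1 - 2 * q.2.1 - 2 * q.2.2.2 + 2 * t) * q.2.1
          + (q.2.2.1 - 2 * q.2.1 - 2 * q.2.2.2 + 2 * s) * q.2.2.2 - α₄) * q.2.1) p v =
      -(((v.1 - 2 * v.2.1 - 2 * v.2.2.2) * p.2.1
          + (p.1 - 2 * p.2.1 - 2 * p.2.2.2 + 2 * t) * v.2.1
          + (v.2.2.1 - 2 * v.2.1 - 2 * v.2.2.2) * p.2.2.2
          + (p.2.2.1 - 2 * p.2.1 - 2 * p.2.2.2 + 2 * s) * v.2.2.2) * p.2.1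
        + ((p.1 - 2 * p.2.1 - 2 * p.2.2.2 + 2 * t) * p.2.1
          + (p.2.2.1 - 2 * p.2.1 - 2 * p.2.2.2 + 2 * s) * p.2.2.2 - α₄) * v.2.1) := by
  have hA := (((hproj_x p).sub ((hproj_y p).const_mul 2)).sub
      ((hproj_w p).const_mul 2)).add_const (2 * t)
  have hB := (((hproj_z p).sub ((hproj_y p).const_mul 2)).sub
      ((hproj_w p).const_mul 2)).add_const (2 * s)
  have h := ((((hA.mul (hproj_y p)).add (hB.mul (hproj_w p))).sub_const α₄).neg).mul (hproj_y p)
  simp only [Pi.mul_def, Pi.add_def, Pi.sub_def, Pi.neg_def] at h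
  rw [Dv, h.fderiv]
  simp
  ring

end helpers

/-- The transformation (x,y,z,w) ↦ (x₄,y₄,z₄,w₄) of the P_IV-type system
is symplectic for y ≠ 0 (t, s held constant). -/
theorem coord4_symplectic (α₄ t s : ℂ) (p : ℂ × ℂ × ℂ × ℂ) (hy : p.2.1 ≠ 0) :
    ∀ u v : ℂ × ℂ × ℂ × ℂ,
      pullback
        (fun q => -((q.1 - 2 * q.2.1 - 2 * q.2.2.2 + 2 * t) * q.2.1
          + (q.2.2.1 - 2 * q.2.1 - 2 * q.2.2.2 + 2 * s) * q.2.2.2 - α₄) * q.2.1)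
        (fun q => 1 / q.2.1)
        (fun q => (q.2.2.1 - 2 * q.2.1 - 2 * q.2.2.2 + 2 * s) * q.2.1)
        (fun q => q.2.2.2 / q.2.1) p u v = omega u v := by
  intro u v
  rw [pullback, Dv_X p u α₄ t s, Dv_X p v α₄ t s, Dv_Y p u hy, Dv_Y p v hy,
    Dv_Z p u s, Dv_Z p v s, Dv_W p u hy, Dv_W p v hy, omega]
  field_simp
  ring
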